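/- If the system has a GED on J with data (K, λ₊, λ₋, P_n^±), then the ranges of the projectors are uniquely determined by range(P_m^+) = { x ∈ ℝ^d : there exists C > 0 with ‖Φ(n,m)x‖ ≤ C λ₊^{n−m}‖x‖ for all n ≥ m in J }. -/

import Mathlib

open scoped RealInnerProductSpace ENNReal
open Filter

noncomputable section

/-- `d`-dimensional Euclidean space `ℝ^d`. -/
abbrev Euc (d : ℕ) := EuclideanSpace ℝ (Fin d)

/-- Bounded linear operators on `ℝ^d` (i.e. `d × d` matrices, with the operator norm). -/
abbrev Op (d : ℕ) := Euc d →L[ℝ] Euc d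

/-- The maximal principal angle between two subspaces of `ℝ^d`,
`∠(V,W) = arccos( min_{v ∈ V, ‖v‖=1} max_{w ∈ W, ‖w‖=1} vᵀw )`. -/
def subAngle {d : ℕ} (V W : Submodule ℝ (Euc d)) : ℝ :=
  Real.arccos (sInf {x : ℝ | ∃ v ∈ V, ‖v‖ = 1 ∧
    x = sSup {y : ℝ | ∃ w ∈ W, ‖w‖ = 1 ∧ y = ⟪v, w⟫}})

/-- `Φ` is the solution operator of `u_{n+1} = A_n u_n` on `J = {n ∈ ℤ : n ≥ n₀}`:
`Φ(n,n) = I` and `Φ(n+1,m) = A_n Φ(n,m)` (for invertible `A_n` this uniquely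
determines `Φ(n,m)` for all `n, m ∈ J`, forward and backward). -/
def IsSolOp {d : ℕ} (n₀ : ℤ) (A : ℤ → Op d) (Φ : ℤ → ℤ → Op d) : Prop :=
  (∀ n : ℤ, n₀ ≤ n → Φ n n = 1) ∧
  (∀ n m : ℤ, n₀ ≤ n → n₀ ≤ m → Φ (n + 1) m = (A n).comp (Φ n m))

/-- The rate `λ^k` of a generalized exponential dichotomy, with the conventions
`0^k = 0` (used for `k ≥ 0`) and `∞^k = 0` (used for `k ≤ 0`). -/
def dichPow (lam : ℝ≥0∞) (k : ℤ) : ℝ≥0∞ :=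
  if lam = 0 ∨ lam = ⊤ then 0 else lam ^ k

/-- Generalized exponential dichotomy (GED) on `J = {n ∈ ℤ : n ≥ n₀}` with data
`(K, λ₊, λ₋, P_n^±)`, where `P_n^- = 1 - P_n^+`: rates `0 ≤ λ₊ < λ₋ ≤ ∞` (the
pair `(0,∞)` excluded), invariant projectors, and the estimates
`‖Φ(n,m)P_m^+‖ ≤ K λ₊^{n−m}` for `n ≥ m`, `‖Φ(n,m)P_m^-‖ ≤ K λ₋^{n−m}` for `n ≤ m`. -/
def GED {d : ℕ} (n₀ : ℤ) (Φ : ℤ → ℤ → Op d) (K : ℝ) (lamP lamM : ℝ≥0∞)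
    (P : ℤ → Op d) : Prop :=
  0 < K ∧ lamP < lamM ∧ ¬(lamP = 0 ∧ lamM = ⊤) ∧
  (∀ n : ℤ, n₀ ≤ n → (P n).comp (P n) = P n) ∧
  (∀ n m : ℤ, n₀ ≤ n → n₀ ≤ m → (P n).comp (Φ n m) = (Φ n m).comp (P m)) ∧
  (∀ n m : ℤ, n₀ ≤ m → m ≤ n →
    (‖(Φ n m).comp (P m)‖₊ : ℝ≥0∞) ≤ ENNReal.ofReal K * dichPow lamP (n - m)) ∧
  (∀ n m : ℤ, n₀ ≤ n → n ≤ m →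
    (‖(Φ n m).comp (1 - P m)‖₊ : ℝ≥0∞) ≤ ENNReal.ofReal K * dichPow lamM (n - m))

/-- Cocycle property of the solution operator. -/
theorem solop_cocycle {d : ℕ} (n₀ : ℤ) (A : ℤ → Op d) (Φ : ℤ → ℤ → Op d)
    (hA : ∀ n : ℤ, n₀ ≤ n → IsUnit (A n)) (hΦ : IsSolOp n₀ A Φ) :
    ∀ m k : ℤ, n₀ ≤ m → n₀ ≤ k → ∀ n : ℤ, n₀ ≤ n →
      Φ n k = (Φ n m).comp (Φ m k) := by
  obtain ⟨hid, hrec⟩ := hΦ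
  intro m k hm hk
  have base : Φ m k = (Φ m m).comp (Φ m k) := by
    rw [hid m hm, ContinuousLinearMap.one_def, ContinuousLinearMap.id_comp]
  intro n hn
  rcases le_total m n with h | h
  · clear hn
    refine Int.le_induction (motive := fun n _ => Φ n k = (Φ n m).comp (Φ m k)) base ?_ n h
    intro n hmn ih
    rw [hrec n k (hm.trans hmn) hk, hrec n m (hm.trans hmn) hm,
      ih, ContinuousLinearMap.comp_assoc]
  · refine Int.le_induction_down
      (motive := fun n _ => n₀ ≤ n → Φ n k = (Φ n m).comp (Φ m k)) (fun _ => base) ?_ n h hn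
    intro n hmn ih hn1
    have hn0 : n₀ ≤ n := by omega
    have e1 : Φ n k = (A (n - 1)).comp (Φ (n - 1) k) := by
      have h := hrec (n - 1) k hn1 hk; rwa [sub_add_cancel] at h
    have e2 : Φ n m = (A (n - 1)).comp (Φ (n - 1) m) := by
      have h := hrec (n - 1) m hn1 hm; rwa [sub_add_cancel] at h
    have e4 : A (n - 1) * Φ (n - 1) k
        = A (n - 1) * ((Φ (n - 1) m).comp (Φ m k)) := by
      rw [ContinuousLinearMap.mul_def, ContinuousLinearMap.mul_def, ← e1, ih hn0, e2,
        ContinuousLinearMap.comp_assoc]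
    exact (hA (n - 1) hn1).mul_left_cancel e4

/-- for a GED the ranges of the projectors are uniquely determined by
`range(P_m^+) = {x : ∃ C>0, ‖Φ(n,m)x‖ ≤ C λ₊^{n−m}‖x‖ for all n ≥ m in J}`. -/
theorem statement4 {d : ℕ} (n₀ : ℤ) (A : ℤ → Op d) (Φ : ℤ → ℤ → Op d)
    (hA : ∀ n : ℤ, n₀ ≤ n → IsUnit (A n))
    (hAbd : ∃ M : ℝ, ∀ n : ℤ, n₀ ≤ n → ‖A n‖ ≤ M ∧ ‖Ring.inverse (A n)‖ ≤ M)
    (hΦ : IsSolOp n₀ A Φ)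
    (K : ℝ) (lamP lamM : ℝ≥0∞) (P : ℤ → Op d)
    (hGED : GED n₀ Φ K lamP lamM P) :
    ∀ m : ℤ, n₀ ≤ m →
      Set.range ⇑(P m) =
        {x : Euc d | ∃ C : ℝ, 0 < C ∧ ∀ n : ℤ, m ≤ n →
          (‖Φ n m x‖₊ : ℝ≥0∞) ≤ ENNReal.ofReal C * dichPow lamP (n - m) * (‖x‖₊ : ℝ≥0∞)} := by
  obtain ⟨hK, hlt, hne0top, hproj, hcomm, hplus, hminus⟩ := hGED
  have hid := hΦ.1
  have coc := solop_cocycle n₀ A Φ hA hΦ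
  intro m hm
  ext x
  simp only [Set.mem_range, Set.mem_setOf_eq]
  constructor
  · rintro ⟨y, rfl⟩
    refine ⟨K, hK, fun n hn => ?_⟩
    have hx : P m (P m y) = P m y := by
      have h := hproj m hm
      calc P m (P m y) = ((P m).comp (P m)) y := rfl
        _ = P m y := by rw [h]
    calc (‖Φ n m (P m y)‖₊ : ℝ≥0∞)
        = ‖((Φ n m).comp (P m)) (P m y)‖₊ := by
          rw [ContinuousLinearMap.comp_apply, hx]
      _ ≤ (‖(Φ n m).comp (P m)‖₊ : ℝ≥0∞) * ‖P m y‖₊ := by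
          rw [← ENNReal.coe_mul]
          exact_mod_cast ContinuousLinearMap.le_opNNNorm _ _
      _ ≤ ENNReal.ofReal K * dichPow lamP (n - m) * ‖P m y‖₊ :=
          mul_le_mul_left (hplus n m hm hn) _
  · rintro ⟨C, hC, hbd⟩
    set y := x - P m x with hy
    have hyim : ∀ n : ℤ, m ≤ n →
        y = ((Φ m n).comp (1 - P n)) (Φ n m x) := by
      intro n hn
      have hn0 : n₀ ≤ n := hm.trans hn
      have h1 : (1 - P n) (Φ n m x) = Φ n m y := by
        have hc : P n (Φ n m x) = Φ n m (P m x) := by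
          have h := hcomm n m hn0 hm
          calc P n (Φ n m x) = ((P n).comp (Φ n m)) x := rfl
            _ = ((Φ n m).comp (P m)) x := by rw [h]
            _ = Φ n m (P m x) := rfl
        simp only [ContinuousLinearMap.sub_apply, ContinuousLinearMap.one_apply, hc, hy,
          map_sub]
      have h2 : Φ m n (Φ n m y) = y := by
        have h := coc n m hn0 hm m hm
        calc Φ m n (Φ n m y) = ((Φ m n).comp (Φ n m)) y := rfl
          _ = (Φ m m) y := by rw [← h]
          _ = y := by rw [hid m hm]; rfl
      rw [ContinuousLinearMap.comp_apply, h1, h2]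
    have hybd : ∀ n : ℤ, m ≤ n → (‖y‖₊ : ℝ≥0∞) ≤
        (ENNReal.ofReal K * dichPow lamM (m - n)) *
        (ENNReal.ofReal C * dichPow lamP (n - m) * ‖x‖₊) := by
      intro n hn
      have hn0 : n₀ ≤ n := hm.trans hn
      calc (‖y‖₊ : ℝ≥0∞) = ‖((Φ m n).comp (1 - P n)) (Φ n m x)‖₊ := by rw [← hyim n hn]
        _ ≤ (‖(Φ m n).comp (1 - P n)‖₊ : ℝ≥0∞) * ‖Φ n m x‖₊ := by
            rw [← ENNReal.coe_mul]
            exact_mod_cast ContinuousLinearMap.le_opNNNorm _ _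
        _ ≤ (ENNReal.ofReal K * dichPow lamM (m - n)) *
            (ENNReal.ofReal C * dichPow lamP (n - m) * ‖x‖₊) :=
            mul_le_mul' (hminus m n hm hn) (hbd n hn)
    have hy0 : y = 0 := by
      by_cases hMtop : lamM = ⊤
      · have h := hybd m le_rfl
        rw [sub_self] at h
        have hd : dichPow lamM 0 = 0 := by simp [dichPow, hMtop]
        rw [hd, mul_zero, zero_mul] at h
        simpa using h
      by_cases hP0 : lamP = 0
      · have h := hbd m le_rfl
        rw [sub_self] at h
        have hd : dichPow lamP 0 = 0 := by simp [dichPow, hP0]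
        rw [hd, mul_zero, zero_mul] at h
        have hxm : Φ m m x = x := by rw [hid m hm]; rfl
        rw [hxm] at h
        have hx0 : x = 0 := by simpa using h
        simp [hy, hx0]
      -- main case: 0 < lamP < lamM < ⊤
      have hM0 : lamM ≠ 0 := fun h => by simp [h] at hlt
      have hPtop : lamP ≠ ⊤ := (hlt.trans (lt_top_iff_ne_top.mpr hMtop)).ne
      set r : ℝ≥0∞ := lamP / lamM with hr
      have hrlt : r < 1 := by
        rw [hr, ENNReal.div_lt_iff (Or.inl hM0) (Or.inl hMtop), one_mul]; exact hlt
      set B : ℝ≥0∞ := ENNReal.ofReal K * ENNReal.ofReal C * ‖x‖₊ with hB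
      have hBtop : B ≠ ⊤ := by
        rw [hB]
        exact ENNReal.mul_ne_top (ENNReal.mul_ne_top ENNReal.ofReal_ne_top
          ENNReal.ofReal_ne_top) ENNReal.coe_ne_top
      have hbk : ∀ k : ℕ, (‖y‖₊ : ℝ≥0∞) ≤ B * r ^ k := by
        intro k
        have h := hybd (m + k) (by omega)
        have e1 : dichPow lamM (m - (m + k)) = (lamM ^ k)⁻¹ := by
          rw [dichPow, if_neg (by simp [hM0, hMtop]),
            show (m - (m + (k:ℤ))) = -(k:ℤ) by ring,
            ENNReal.zpow_neg, zpow_natCast]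
        have e2 : dichPow lamP ((m + k) - m) = lamP ^ k := by
          rw [dichPow, if_neg (by simp [hP0, hPtop]),
            show ((m + (k:ℤ)) - m) = (k:ℤ) by ring, zpow_natCast]
        rw [e1, e2] at h
        refine h.trans_eq ?_
        rw [hB, hr, div_eq_mul_inv, mul_pow, ← ENNReal.inv_pow]
        ring
      have htend : Filter.Tendsto (fun k : ℕ => B * r ^ k) atTop (nhds 0) := by
        have h1 := ENNReal.tendsto_pow_atTop_nhds_zero_of_lt_one hrlt
        have h2 := ENNReal.Tendsto.const_mul h1 (Or.inr hBtop)
        simpa using h2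
      have h0 : (‖y‖₊ : ℝ≥0∞) ≤ 0 := ge_of_tendsto' htend hbk
      have hny : ‖y‖₊ = 0 := by simpa using h0
      simpa using hny
    exact ⟨x, (sub_eq_zero.mp (hy ▸ hy0)).symm⟩
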